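/- In a 0-simple semigroup, a product s_1 s_2 ⋯ s_n equals 0 if and only if some adjacent pair satisfies s_i s_{i+1} = 0. -/

import Mathlib

namespace ZeroSimpleAux

variable {S : Type*} [SemigroupWithZero S]

def spow (x : S) : ℕ → S
  | 0 => x
  | n+1 => spow x n * x

lemma spow_succ (x : S) (n : ℕ) : spow x (n+1) = spow x n * x := rfl

lemma spow_succ' (x : S) (n : ℕ) : spow x (n+1) = x * spow x n := by
  induction n with
  | zero => rfl
  | succ n ih =>
      calc spow x (n+2) = spow x (n+1) * x := rfl
        _ = (x * spow x n) * x := by rw [ih]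
        _ = x * (spow x n * x) := mul_assoc _ _ _
        _ = x * spow x (n+1) := rfl

lemma spow_add (x : S) (m n : ℕ) : spow x (m + n + 1) = spow x m * spow x n := by
  induction n with
  | zero => rfl
  | succ n ih =>
      have h : m + (n + 1) + 1 = (m + n + 1) + 1 := by ring
      calc spow x (m + (n+1) + 1) = spow x ((m + n + 1) + 1) := by rw [h]
        _ = spow x (m + n + 1) * x := rfl
        _ = (spow x m * spow x n) * x := by rw [ih]
        _ = spow x m * (spow x n * x) := mul_assoc _ _ _
        _ = spow x m * spow x (n+1) := rfl

lemma spow_eq_mul_right (s a : S) (n : ℕ) : ∃ v : S, spow (s * a) n = v * a := by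
  cases n with
  | zero => exact ⟨s, rfl⟩
  | succ n => exact ⟨spow (s*a) n * s, by rw [spow_succ, ← mul_assoc]⟩

/-- In a 0-simple semigroup, SaS = S for every a ≠ 0. -/
lemma SaS_eq_univ
    (hS2 : ∃ x y : S, x * y ≠ 0)
    (h0simple : ∀ I : Set S, I.Nonempty →
      (∀ x ∈ I, ∀ s : S, s * x ∈ I ∧ x * s ∈ I) → I = {0} ∨ I = Set.univ)
    (a : S) (ha : a ≠ 0) : ∀ x : S, ∃ s t : S, s * a * t = x := by
  obtain ⟨x0, y0, hxy0⟩ := hS2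
  -- Step 1: S² = univ
  have hS2univ : ∀ x : S, ∃ u v : S, u * v = x := by
    have hcl : ∀ x ∈ {x : S | ∃ u v : S, u * v = x}, ∀ s : S,
        s * x ∈ {x : S | ∃ u v : S, u * v = x} ∧ x * s ∈ {x : S | ∃ u v : S, u * v = x} := by
      rintro x ⟨u, v, rfl⟩ s
      exact ⟨⟨s * u, v, by rw [mul_assoc]⟩, ⟨u, v * s, by rw [mul_assoc]⟩⟩
    rcases h0simple {x : S | ∃ u v : S, u * v = x} ⟨0, 0, 0, mul_zero 0⟩ hcl with h | h
    · exfalso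
      apply hxy0
      have hm : x0 * y0 ∈ {x : S | ∃ u v : S, u * v = x} := ⟨x0, y0, rfl⟩
      rw [h] at hm
      simpa using hm
    · intro x
      exact Set.eq_univ_iff_forall.mp h x
  -- Step 2: T = {x | ∀ s t, s * x * t = 0} equals {0}
  have hT : ∀ x : S, (∀ s t : S, s * x * t = 0) → x = 0 := by
    have hcl : ∀ x ∈ {x : S | ∀ s t : S, s * x * t = 0}, ∀ s : S,
        s * x ∈ {x : S | ∀ s t : S, s * x * t = 0} ∧
        x * s ∈ {x : S | ∀ s t : S, s * x * t = 0} := by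
      intro x hx s
      constructor
      · intro s' t'
        have h : s' * (s * x) * t' = (s' * s) * x * t' := by rw [mul_assoc s' s x]
        rw [h]; exact hx _ _
      · intro s' t'
        have h : s' * (x * s) * t' = s' * x * (s * t') := by
          rw [← mul_assoc s' x s, mul_assoc (s' * x) s t']
        rw [h]; exact hx _ _
    rcases h0simple {x : S | ∀ s t : S, s * x * t = 0} ⟨0, fun s t => by simp⟩ hcl with h | h
    · intro x hx
      have hm : x ∈ {x : S | ∀ s t : S, s * x * t = 0} := hx
      rw [h] at hm
      simpa using hm
    · exfalso
      obtain ⟨p, q, hpq⟩ := hS2univ x0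
      apply hxy0
      have hq : q ∈ {x : S | ∀ s t : S, s * x * t = 0} :=
        Set.eq_univ_iff_forall.mp h q
      calc x0 * y0 = p * q * y0 := by rw [hpq]
        _ = 0 := hq p y0
  -- Step 3: SaS is a nonzero ideal, hence univ
  have hna : ∃ s t : S, s * a * t ≠ 0 := by
    by_contra h
    push_neg at h
    exact ha (hT a h)
  obtain ⟨s0, t0, hst0⟩ := hna
  have hcl : ∀ x ∈ {x : S | ∃ s t : S, s * a * t = x}, ∀ s' : S,
      s' * x ∈ {x : S | ∃ s t : S, s * a * t = x} ∧
      x * s' ∈ {x : S | ∃ s t : S, s * a * t = x} := by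
    rintro x ⟨s, t, rfl⟩ s'
    refine ⟨⟨s' * s, t, ?_⟩, ⟨s, t * s', ?_⟩⟩
    · rw [mul_assoc s' s a, mul_assoc s' (s*a) t]
    · rw [mul_assoc (s*a) t s']
  rcases h0simple {x : S | ∃ s t : S, s * a * t = x} ⟨s0 * a * t0, s0, t0, rfl⟩ hcl with h | h
  · exfalso
    have hm : s0 * a * t0 ∈ {x : S | ∃ s t : S, s * a * t = x} := ⟨s0, t0, rfl⟩
    rw [h] at hm
    exact hst0 (by simpa using hm)
  · intro x
    exact Set.eq_univ_iff_forall.mp h x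

/-- key: if a*b ≠ 0 then b = u * (a*b) for some u. -/
lemma exists_left_unit [Fintype S]
    (hS2 : ∃ x y : S, x * y ≠ 0)
    (h0simple : ∀ I : Set S, I.Nonempty →
      (∀ x ∈ I, ∀ s : S, s * x ∈ I ∧ x * s ∈ I) → I = {0} ∨ I = Set.univ)
    (a b : S) (hab : a * b ≠ 0) : ∃ u : S, u * (a * b) = b := by
  obtain ⟨s, t, hst⟩ := SaS_eq_univ hS2 h0simple (a * b) hab b
  set w := s * a with hw
  have h1 : w * b * t = b := by rw [hw, mul_assoc s a b]; exact hst
  have hpow : ∀ n : ℕ, spow w n * b * spow t n = b := by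
    intro n
    induction n with
    | zero => exact h1
    | succ n ih =>
        rw [spow_succ w n, spow_succ' t n]
        calc spow w n * w * b * (t * spow t n)
            = spow w n * (w * b * t) * spow t n := by
              simp only [mul_assoc]
          _ = spow w n * b * spow t n := by rw [h1]
          _ = b := ih
  obtain ⟨i, j, hij, hfij⟩ := Fintype.exists_ne_map_eq_of_card_lt
    (fun n : Fin (Fintype.card S + 1) => spow w n) (by simp)
  wlog hlt : (i : ℕ) < (j : ℕ) generalizing i j
  · exact this j i hij.symm hfij.symm (by omega)
  obtain ⟨d, hd⟩ : ∃ d : ℕ, (j : ℕ) = (d : ℕ) + (i : ℕ) + 1 := ⟨(j : ℕ) - i - 1, by omega⟩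
  have hsplit : spow w (j : ℕ) = spow w d * spow w (j : ℕ) := by
    conv_lhs => rw [hd, spow_add, hfij]
  have hp : spow w (j:ℕ) * (b * spow t (j:ℕ)) = b := by
    rw [← mul_assoc]; exact hpow j
  have hb : spow w d * b = b := by
    conv_rhs => rw [← hp]
    rw [hsplit]
    simp only [mul_assoc]
    rw [← mul_assoc (spow w (j:ℕ)) b _, hpow j]
  obtain ⟨v, hv⟩ := spow_eq_mul_right s a d
  refine ⟨v, ?_⟩
  rw [← mul_assoc, ← hv, ← hw, hb]

lemma key3 [Fintype S]
    (hS2 : ∃ x y : S, x * y ≠ 0)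
    (h0simple : ∀ I : Set S, I.Nonempty →
      (∀ x ∈ I, ∀ s : S, s * x ∈ I ∧ x * s ∈ I) → I = {0} ∨ I = Set.univ)
    (a b c : S) (hab : a * b ≠ 0) (hbc : b * c ≠ 0) : (a * b) * c ≠ 0 := by
  obtain ⟨u, hu⟩ := exists_left_unit hS2 h0simple a b hab
  intro h
  apply hbc
  calc b * c = (u * (a * b)) * c := by rw [hu]
    _ = u * ((a * b) * c) := mul_assoc _ _ _
    _ = 0 := by rw [h, mul_zero]

lemma foldl_zero : ∀ l : List S, l.foldl (· * ·) (0 : S) = 0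
  | [] => rfl
  | x :: l => by rw [List.foldl_cons, zero_mul]; exact foldl_zero l

lemma chain_of_ne : ∀ (l : List S) (a b : S), (b :: l).foldl (· * ·) a ≠ 0 →
    List.Chain (fun x y : S => x * y ≠ 0) a (b :: l)
  | [], a, b, h => List.Chain.cons (by simpa using h) List.Chain.nil
  | c :: l, a, b, h => by
      have h' : (c :: l).foldl (· * ·) (a * b) ≠ 0 := by simpa using h
      have hab : a * b ≠ 0 := by
        intro h0; apply h'; rw [h0]; exact foldl_zero _
      have ih := chain_of_ne l (a * b) c h'
      simp only [List.Chain] at ih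
      rw [List.chain_cons] at ih
      obtain ⟨habc, hch⟩ := ih
      have hbc : b * c ≠ 0 := by
        intro h0; apply habc; rw [mul_assoc, h0, mul_zero]
      exact List.Chain.cons hab (List.Chain.cons hbc hch)

lemma ne_of_chain [Fintype S]
    (hS2 : ∃ x y : S, x * y ≠ 0)
    (h0simple : ∀ I : Set S, I.Nonempty →
      (∀ x ∈ I, ∀ s : S, s * x ∈ I ∧ x * s ∈ I) → I = {0} ∨ I = Set.univ)
    (l : List S) : ∀ (a b : S),
    List.Chain (fun x y : S => x * y ≠ 0) a (b :: l) → (b :: l).foldl (· * ·) a ≠ 0 := by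
  induction l with
  | nil =>
      intro a b hc
      simp only [List.Chain] at hc
      rw [List.chain_cons] at hc
      simpa using hc.1
  | cons c l ih =>
      intro a b hc
      simp only [List.Chain] at hc
      rw [List.chain_cons] at hc
      obtain ⟨hab, hc⟩ := hc
      rw [List.chain_cons] at hc
      obtain ⟨hbc, hch⟩ := hc
      have h1 : (a * b) * c ≠ 0 := key3 hS2 h0simple a b c hab hbc
      have h2 := ih (a * b) c (List.chain_cons.mpr ⟨h1, hch⟩)
      simpa using h2

end ZeroSimpleAux

open ZeroSimpleAux in
/-- In a finite 0-simple semigroup, a product s₁s₂⋯sₙ (n ≥ 2) equals 0 if and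
only if some adjacent pair satisfies sᵢs_{i+1} = 0.  Here the word is
`a :: b :: l` and its product is `(b :: l).foldl (· * ·) a`. -/
theorem zero_simple_product_eq_zero_iff {S : Type*} [SemigroupWithZero S] [Fintype S]
    (hS2 : ∃ x y : S, x * y ≠ 0)
    (h0simple : ∀ I : Set S, I.Nonempty →
      (∀ x ∈ I, ∀ s : S, s * x ∈ I ∧ x * s ∈ I) → I = {0} ∨ I = Set.univ)
    (a b : S) (l : List S) :
    (b :: l).foldl (· * ·) a = 0 ↔
      ∃ i : ℕ, i + 1 < (a :: b :: l).length ∧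
        (a :: b :: l).getD i 0 * (a :: b :: l).getD (i + 1) 0 = 0 := by
  classical
  have h1 : (b :: l).foldl (· * ·) a = 0 ↔
      ¬ List.Chain (fun x y : S => x * y ≠ 0) a (b :: l) := by
    constructor
    · intro h hc
      exact ne_of_chain hS2 h0simple l a b hc h
    · intro h
      by_contra h0
      exact h (chain_of_ne l a b h0)
  have h2 : List.Chain (fun x y : S => x * y ≠ 0) a (b :: l) ↔
      List.Chain' (fun x y : S => x * y ≠ 0) (a :: b :: l) := Iff.rfl
  rw [h1, h2]
  unfold List.Chain'
  rw [List.isChain_iff_getElem]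
  push_neg
  constructor
  · rintro ⟨i, hi, h0⟩
    have hi' : i + 1 < (a :: b :: l).length := by
      simp only [List.length_cons] at hi ⊢; omega
    refine ⟨i, hi', ?_⟩
    rw [List.getD_eq_getElem (hn := by omega), List.getD_eq_getElem (hn := by omega)]
    exact h0
  · rintro ⟨i, hi, h0⟩
    have hi' : i < (a :: b :: l).length - 1 := by
      simp only [List.length_cons] at hi ⊢; omega
    refine ⟨i, by omega, ?_⟩
    rw [List.getD_eq_getElem (hn := by omega), List.getD_eq_getElem (hn := by omega)] at h0
    exact h0
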